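/- Let T ≥ 1 be an integer, R ≥ √T, and α = 1/(5R√T). Let u^{(1)}, …, u^{(T)} ∈ ℝ^d be orthonormal vectors and x^{(1)}, …, x^{(T)} ∈ ℝ^d satisfy ‖x^{(t)}‖ ≤ R for every t. For 0 ≤ t ≤ T let P_t denote the orthogonal projection onto the linear span of {x^{(1)}, u^{(1)}, …, x^{(t)}, u^{(t)}} and let P_t^⊥ = I − P_t. Assume that for every t ≤ T and every j ∈ {t, …, T}, |⟨u^{(j)}, P_{t−1}^⊥ x^{(t)}⟩| ≤ α·‖P_{t−1}^⊥ x^{(t)}‖. Then: (a) for every t ≤ T and every j ∈ {t, …, T}, ‖P_{t−1} u^{(j)}‖² ≤ 2α²(t−1); and (b) for every s ≤ T and every j ∈ {s, …, T}, |⟨u^{(j)}, x^{(s)}⟩| < 1/2. -/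

import Mathlib

/-- The span of the vectors `x 1, u 1, …, x t, u t`. -/
def spanUpTo {d : ℕ} (u x : ℕ → EuclideanSpace ℝ (Fin d)) (t : ℕ) :
    Submodule ℝ (EuclideanSpace ℝ (Fin d)) :=
  Submodule.span ℝ {v | ∃ s, 1 ≤ s ∧ s ≤ t ∧ (v = x s ∨ v = u s)}

/-- The orthogonal projection `P_t` onto the span of `x 1, u 1, …, x t, u t`
(as a map of the whole space into itself); `P_0 = 0`. -/
noncomputable def projUpTo {d : ℕ} (u x : ℕ → EuclideanSpace ℝ (Fin d)) (t : ℕ)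
    (y : EuclideanSpace ℝ (Fin d)) : EuclideanSpace ℝ (Fin d) :=
  (Submodule.orthogonalProjection (spanUpTo u x t) y : EuclideanSpace ℝ (Fin d))

section Aux
variable {d : ℕ}
local notation "E" => EuclideanSpace ℝ (Fin d)

lemma aux_span_zero (u x : ℕ → EuclideanSpace ℝ (Fin d)) : spanUpTo u x 0 = ⊥ := by
  rw [spanUpTo]
  convert Submodule.span_empty (R := ℝ)
  ext v
  simp only [Set.mem_setOf_eq, Set.mem_empty_iff_false, iff_false, not_exists]
  intro s hs
  omega

lemma aux_span_succ (u x : ℕ → EuclideanSpace ℝ (Fin d)) (t : ℕ) (ht : 1 ≤ t) :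
    spanUpTo u x t = (spanUpTo u x (t-1) ⊔ (ℝ ∙ x t)) ⊔ (ℝ ∙ u t) := by
  rw [spanUpTo, spanUpTo]
  have hset : {v | ∃ s, 1 ≤ s ∧ s ≤ t ∧ (v = x s ∨ v = u s)}
      = {v | ∃ s, 1 ≤ s ∧ s ≤ t - 1 ∧ (v = x s ∨ v = u s)} ∪ ({x t} ∪ {u t}) := by
    ext v
    simp only [Set.mem_setOf_eq, Set.mem_union, Set.mem_singleton_iff]
    constructor
    · rintro ⟨s, h1, h2, h3⟩
      rcases eq_or_lt_of_le h2 with rfl | hlt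
      · right; tauto
      · left; exact ⟨s, h1, by omega, h3⟩
    · rintro (⟨s, h1, h2, h3⟩ | h | h)
      · exact ⟨s, h1, by omega, h3⟩
      · exact ⟨t, ht, le_refl t, Or.inl h⟩
      · exact ⟨t, ht, le_refl t, Or.inr h⟩
  rw [hset, Submodule.span_union, Submodule.span_union, sup_assoc]

/-- Pythagoras for orthogonal projection. -/
lemma aux_pyth (K : Submodule ℝ (EuclideanSpace ℝ (Fin d))) (v : EuclideanSpace ℝ (Fin d)) :
    ‖v‖ ^ 2 = ‖(Submodule.orthogonalProjection K v : E)‖ ^ 2 + ‖v - Submodule.orthogonalProjection K v‖ ^ 2 := by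
  have h0 : (inner ℝ ((Submodule.orthogonalProjection K v : E)) (v - Submodule.orthogonalProjection K v) : ℝ) = 0 := by
    have := Submodule.sub_starProjection_mem_orthogonal (K := K) v
    exact (Submodule.mem_orthogonal K _).mp this _ (Submodule.orthogonalProjection K v).2
  have hv : v = (Submodule.orthogonalProjection K v : E) + (v - Submodule.orthogonalProjection K v) := by abel
  calc ‖v‖ ^ 2 = ‖(Submodule.orthogonalProjection K v : E) + (v - Submodule.orthogonalProjection K v)‖ ^ 2 := by rw [← hv]
    _ = _ := by rw [norm_add_sq_real, h0]; ring

/-- Key step lemma. -/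
lemma aux_key (K : Submodule ℝ (EuclideanSpace ℝ (Fin d))) (v y : EuclideanSpace ℝ (Fin d))
    (c0 : ℝ) (hc0 : 0 ≤ c0)
    (h : |(inner ℝ y (v - Submodule.orthogonalProjection K v) : ℝ)| ≤
      c0 * ‖v - (Submodule.orthogonalProjection K v : E)‖) :
    ‖(Submodule.orthogonalProjection (K ⊔ (ℝ ∙ v)) y : E)‖ ^ 2 ≤
      ‖(Submodule.orthogonalProjection K y : E)‖ ^ 2 + c0 ^ 2 := by
  set L := K ⊔ (ℝ ∙ v) with hL
  have hKL : K ≤ L := le_sup_left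
  set p : EuclideanSpace ℝ (Fin d) := (Submodule.orthogonalProjection L y : E) with hp
  set pk : EuclideanSpace ℝ (Fin d) := (Submodule.orthogonalProjection K y : E) with hpk
  have hproj : (Submodule.orthogonalProjection K p : E) = pk := by
    rw [hp, hpk]
    exact congrArg _ (Submodule.orthogonalProjectionOnto_starProjection_of_le hKL y)
  set w : EuclideanSpace ℝ (Fin d) := p - pk with hw
  have hwK : w ∈ Kᗮ := by
    rw [hw, ← hproj]; exact Submodule.sub_starProjection_mem_orthogonal p
  have hwL : w ∈ L :=
    Submodule.sub_mem _ (Submodule.orthogonalProjection L y).2 (hKL (Submodule.orthogonalProjection K y).2)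
  obtain ⟨k, hk, z, hz, hkz⟩ := Submodule.mem_sup.mp hwL
  obtain ⟨c, rfl⟩ := Submodule.mem_span_singleton.mp hz
  have hwq : w = c • (v - Submodule.orthogonalProjection K v) := by
    have h1 : (Submodule.orthogonalProjection K w : E) = 0 := by
      rw [Submodule.orthogonalProjectionOnto_apply_of_mem_orthogonal hwK]; rfl
    have h2 : (Submodule.orthogonalProjection K (k + c • v) : E)
        = k + c • (Submodule.orthogonalProjection K v : E) := by
      rw [map_add, map_smul]
      push_cast
      rw [show (Submodule.orthogonalProjection K k : E) = k from Submodule.starProjection_eq_self_iff.mpr hk]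
    calc w = w - (Submodule.orthogonalProjection K w : E) := by rw [h1, sub_zero]
      _ = (k + c • v) - (Submodule.orthogonalProjection K (k + c • v) : E) := by rw [hkz]
      _ = c • (v - Submodule.orthogonalProjection K v) := by rw [h2]; module
  have h4 : (inner ℝ pk w : ℝ) = 0 :=
    (Submodule.mem_orthogonal K w).mp hwK pk (Submodule.orthogonalProjection K y).2
  have hyw : (inner ℝ y w : ℝ) = ‖w‖ ^ 2 := by
    have h3 : (inner ℝ (y - p) w : ℝ) = 0 := by
      have := Submodule.sub_starProjection_mem_orthogonal (K := L) y
      exact real_inner_comm w (y - p) ▸ (Submodule.mem_orthogonal L _).mp this w hwL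
    have hy : y = (y - p) + (pk + w) := by rw [hw]; abel
    rw [hy, inner_add_left, inner_add_left, h3, h4, real_inner_self_eq_norm_sq]
    ring
  have habs : ‖w‖ = |c| * ‖v - (Submodule.orthogonalProjection K v : E)‖ := by
    rw [hwq, norm_smul, Real.norm_eq_abs]
  have h5 : ‖w‖ ^ 2 ≤ c0 * ‖w‖ := by
    calc ‖w‖ ^ 2 = (inner ℝ y w : ℝ) := hyw.symm
      _ = c * (inner ℝ y (v - Submodule.orthogonalProjection K v) : ℝ) := by
          rw [hwq, real_inner_smul_right]
      _ ≤ |c * (inner ℝ y (v - Submodule.orthogonalProjection K v) : ℝ)| := le_abs_self _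
      _ = |c| * |(inner ℝ y (v - Submodule.orthogonalProjection K v) : ℝ)| := abs_mul _ _
      _ ≤ |c| * (c0 * ‖v - (Submodule.orthogonalProjection K v : E)‖) :=
          mul_le_mul_of_nonneg_left h (abs_nonneg c)
      _ = c0 * ‖w‖ := by rw [habs]; ring
  have hwle : ‖w‖ ≤ c0 := by nlinarith [norm_nonneg w]
  have pyth : ‖p‖ ^ 2 = ‖pk‖ ^ 2 + ‖w‖ ^ 2 := by
    have hpw : p = pk + w := by rw [hw]; abel
    rw [hpw, norm_add_sq_real, h4]; ring
  have : ‖w‖ ^ 2 ≤ c0 ^ 2 := pow_le_pow_left₀ (norm_nonneg w) hwle 2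
  linarith

lemma aux_proj_congr (K K' : Submodule ℝ (EuclideanSpace ℝ (Fin d))) (h : K = K')
    (y : EuclideanSpace ℝ (Fin d)) :
    (Submodule.orthogonalProjection K y : E) = (Submodule.orthogonalProjection K' y : E) := by
  subst h; rfl

end Aux


set_option maxHeartbeats 4000000 in
theorem stmt14 (d T : ℕ) (hT : 1 ≤ T) (R α : ℝ)
    (hR : Real.sqrt T ≤ R) (hα : α = 1 / (5 * R * Real.sqrt T))
    (u x : ℕ → EuclideanSpace ℝ (Fin d))
    (horth : ∀ i j, 1 ≤ i → i ≤ T → 1 ≤ j → j ≤ T →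
      (inner ℝ (u i) (u j) : ℝ) = if i = j then 1 else 0)
    (hbound : ∀ t, 1 ≤ t → t ≤ T → ‖x t‖ ≤ R)
    (hmain : ∀ t, 1 ≤ t → t ≤ T → ∀ j, t ≤ j → j ≤ T →
      |(inner ℝ (u j) (x t - projUpTo u x (t-1) (x t)) : ℝ)| ≤
        α * ‖x t - projUpTo u x (t-1) (x t)‖) :
    (∀ t, 1 ≤ t → t ≤ T → ∀ j, t ≤ j → j ≤ T →
      ‖projUpTo u x (t-1) (u j)‖ ^ 2 ≤ 2 * α ^ 2 * ((t : ℝ) - 1)) ∧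
    (∀ s, 1 ≤ s → s ≤ T → ∀ j, s ≤ j → j ≤ T →
      |(inner ℝ (u j) (x s) : ℝ)| < 1/2) := by
  -- numeric preliminaries
  have hT1 : (1 : ℝ) ≤ (T : ℝ) := by exact_mod_cast hT
  have hsqT : Real.sqrt T ^ 2 = (T : ℝ) := Real.sq_sqrt (by positivity)
  have h1T : (1 : ℝ) ≤ Real.sqrt T := by nlinarith [Real.sqrt_nonneg (T : ℝ)]
  have hR1 : (1 : ℝ) ≤ R := le_trans h1T hR
  have hkey : α * (5 * R * Real.sqrt T) = 1 := by
    rw [hα]; field_simp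
  have hα0 : 0 < α := by
    rw [hα]; positivity
  have h3 : α * Real.sqrt T * R = 1/5 := by linear_combination hkey / 5
  have hαT : α * T ≤ 1/5 := by
    have h1 : α * (T : ℝ) = α * Real.sqrt T * Real.sqrt T := by
      linear_combination (-α) * hsqT
    have h2 : α * Real.sqrt T * Real.sqrt T ≤ α * Real.sqrt T * R :=
      mul_le_mul_of_nonneg_left hR (by positivity)
    linarith
  have hα5 : α ≤ 1/5 := by nlinarith
  have hαR : α * R ≤ 1/5 := by
    nlinarith [mul_nonneg (mul_nonneg hα0.le (by linarith : (0:ℝ) ≤ R))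
      (by linarith : (0:ℝ) ≤ Real.sqrt (T:ℝ) - 1)]
  have hαRT : α^2 * R^2 * T = 1/25 := by
    have h4 : (α * Real.sqrt T * R)^2 = 1/25 := by rw [h3]; norm_num
    calc α^2 * R^2 * (T:ℝ) = (α * Real.sqrt T * R)^2 := by
          linear_combination (-(α^2) * R^2) * hsqT
      _ = 1/25 := h4
  -- part (a)
  have partA : ∀ t, 1 ≤ t → t ≤ T → ∀ j, t ≤ j → j ≤ T →
      ‖projUpTo u x (t-1) (u j)‖ ^ 2 ≤ 2 * α ^ 2 * ((t : ℝ) - 1) := by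
    intro t ht
    induction t, ht using Nat.le_induction with
    | base =>
      intro _ j _ _
      have hmem : u j ∈ (spanUpTo u x (1-1))ᗮ := by
        rw [show (1:ℕ)-1 = 0 from rfl, aux_span_zero]
        simp
      have hz : projUpTo u x (1-1) (u j) = 0 := by
        rw [projUpTo, Submodule.orthogonalProjectionOnto_apply_of_mem_orthogonal hmem]
        rfl
      rw [hz]
      norm_num
    | succ t ht ih =>
      intro htT j hj hjT
      have htT' : t ≤ T := by omega
      have htR : (t : ℝ) ≤ (T : ℝ) := by exact_mod_cast htT'
      set K := spanUpTo u x (t - 1) with hK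
      set K1 := K ⊔ (ℝ ∙ x t) with hK1
      -- step 1
      have step1 : ∀ j', t ≤ j' → j' ≤ T →
          ‖(Submodule.orthogonalProjection K1 (u j') : EuclideanSpace ℝ (Fin d))‖ ^ 2 ≤
            2 * α ^ 2 * ((t : ℝ) - 1) + α ^ 2 := by
        intro j' h1 h2
        have hm := hmain t ht htT' j' h1 h2
        rw [projUpTo] at hm
        have := aux_key K (x t) (u j') α hα0.le hm
        have hih := ih htT' j' h1 h2
        rw [projUpTo] at hih
        linarith
      have hBt := step1 t le_rfl htT'
      have hBj := step1 j (by omega) hjT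
      set b2 : ℝ := 2 * α ^ 2 * ((t : ℝ) - 1) + α ^ 2 with hb2def
      have hb2nn : 0 ≤ b2 := by
        have : (1 : ℝ) ≤ (t : ℝ) := by exact_mod_cast ht
        nlinarith
      have hb2T : b2 ≤ 2 * α ^ 2 * T := by nlinarith
      have hb2α : b2 ≤ (2/5) * α := by nlinarith
      have hb2small : b2 ≤ 2/25 := by nlinarith
      -- ‖u t‖² = 1 and r = u t - P_{K1} u t
      have hutn : ‖u t‖ ^ 2 = 1 := by
        have := horth t t ht htT' ht htT'
        rw [if_pos rfl, real_inner_self_eq_norm_sq] at this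
        exact this
      have hpyth := aux_pyth K1 (u t)
      have hr2 : ‖u t - (Submodule.orthogonalProjection K1 (u t) : EuclideanSpace ℝ (Fin d))‖ ^ 2
          = 1 - ‖(Submodule.orthogonalProjection K1 (u t) : EuclideanSpace ℝ (Fin d))‖ ^ 2 := by
        rw [← hutn]; linarith [hpyth]
      have hrge : (2/5 : ℝ) ≤ ‖u t - (Submodule.orthogonalProjection K1 (u t) : EuclideanSpace ℝ (Fin d))‖ := by
        nlinarith [norm_nonneg (u t - (Submodule.orthogonalProjection K1 (u t) : EuclideanSpace ℝ (Fin d)))]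
      -- inner ℝ product bound for step 2
      have hjut : (inner ℝ (u j) (u t) : ℝ) = 0 := by
        have := horth j t (by omega) hjT ht htT'
        rwa [if_neg (by omega)] at this
      have hinner2 : |(inner ℝ (u j) (u t - Submodule.orthogonalProjection K1 (u t)) : ℝ)| ≤
          α * ‖u t - (Submodule.orthogonalProjection K1 (u t) : EuclideanSpace ℝ (Fin d))‖ := by
        have hsplit : (inner ℝ (u j) (u t - Submodule.orthogonalProjection K1 (u t)) : ℝ)
            = - (inner ℝ ((Submodule.orthogonalProjection K1 (u j) : EuclideanSpace ℝ (Fin d)))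
                ((Submodule.orthogonalProjection K1 (u t) : EuclideanSpace ℝ (Fin d))) : ℝ) := by
          rw [inner_sub_right, hjut]
          have e1 : (inner ℝ (u j) ((Submodule.orthogonalProjection K1 (u t) : EuclideanSpace ℝ (Fin d))) : ℝ)
              = (inner ℝ ((Submodule.orthogonalProjection K1 (u j) : EuclideanSpace ℝ (Fin d))) (u t) : ℝ) :=
            (Submodule.inner_starProjection_left_eq_right K1 (u j) (u t)).symm
          have e2 : (inner ℝ ((Submodule.orthogonalProjection K1 (u j) : EuclideanSpace ℝ (Fin d)))
              (u t - Submodule.orthogonalProjection K1 (u t)) : ℝ) = 0 :=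
            (Submodule.mem_orthogonal K1 _).mp
              (Submodule.sub_starProjection_mem_orthogonal (K := K1) (u t)) _
              (Submodule.orthogonalProjection K1 (u j)).2
          rw [inner_sub_right] at e2
          rw [e1]
          linarith
        rw [hsplit, abs_neg]
        have hcs := abs_real_inner_le_norm
          ((Submodule.orthogonalProjection K1 (u j) : EuclideanSpace ℝ (Fin d)))
          ((Submodule.orthogonalProjection K1 (u t) : EuclideanSpace ℝ (Fin d)))
        have hprod : ‖(Submodule.orthogonalProjection K1 (u j) : EuclideanSpace ℝ (Fin d))‖ *
            ‖(Submodule.orthogonalProjection K1 (u t) : EuclideanSpace ℝ (Fin d))‖ ≤ b2 := by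
          nlinarith [norm_nonneg ((Submodule.orthogonalProjection K1 (u j) : EuclideanSpace ℝ (Fin d))),
            norm_nonneg ((Submodule.orthogonalProjection K1 (u t) : EuclideanSpace ℝ (Fin d)))]
        calc |(inner ℝ ((Submodule.orthogonalProjection K1 (u j) : EuclideanSpace ℝ (Fin d)))
              ((Submodule.orthogonalProjection K1 (u t) : EuclideanSpace ℝ (Fin d))) : ℝ)| ≤ _ := hcs
          _ ≤ b2 := hprod
          _ ≤ (2/5) * α := hb2α
          _ ≤ α * ‖u t - (Submodule.orthogonalProjection K1 (u t) : EuclideanSpace ℝ (Fin d))‖ := by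
              nlinarith
      have step2 := aux_key K1 (u t) (u j) α hα0.le hinner2
      -- conclude
      have hspan : spanUpTo u x t = K1 ⊔ (ℝ ∙ u t) := by
        rw [hK1, hK]; exact aux_span_succ u x t ht
      rw [show t + 1 - 1 = t from rfl, projUpTo,
        aux_proj_congr _ _ hspan]
      push_cast
      have hj2 := step1 j (by omega) hjT
      calc ‖(Submodule.orthogonalProjection (K1 ⊔ (ℝ ∙ u t)) (u j) : EuclideanSpace ℝ (Fin d))‖ ^ 2
          ≤ ‖(Submodule.orthogonalProjection K1 (u j) : EuclideanSpace ℝ (Fin d))‖ ^ 2 + α ^ 2 := step2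
        _ ≤ (2 * α ^ 2 * ((t : ℝ) - 1) + α ^ 2) + α ^ 2 := by linarith
        _ = 2 * α ^ 2 * ((t : ℝ) + 1 - 1) := by ring
  refine ⟨partA, ?_⟩
  -- part (b)
  intro s hs hsT j hj hjT
  have hsR : (s : ℝ) ≤ (T : ℝ) := by exact_mod_cast hsT
  set K := spanUpTo u x (s - 1) with hK
  have hA := partA s hs hsT j hj hjT
  rw [projUpTo] at hA
  have hAT : ‖(Submodule.orthogonalProjection K (u j) : EuclideanSpace ℝ (Fin d))‖ ^ 2 ≤ 2 * α ^ 2 * T := by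
    have h1s : (1 : ℝ) ≤ (s : ℝ) := by exact_mod_cast hs
    nlinarith
  have hm := hmain s hs hsT j hj hjT
  rw [projUpTo] at hm
  have hxs : ‖x s‖ ≤ R := hbound s hs hsT
  have hpyth := aux_pyth K (x s)
  have hxP : ‖x s - (Submodule.orthogonalProjection K (x s) : EuclideanSpace ℝ (Fin d))‖ ≤ R := by
    nlinarith [norm_nonneg (x s - (Submodule.orthogonalProjection K (x s) : EuclideanSpace ℝ (Fin d))),
      norm_nonneg ((Submodule.orthogonalProjection K (x s) : EuclideanSpace ℝ (Fin d))), norm_nonneg (x s)]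
  have hsecond : |(inner ℝ (u j) (x s - Submodule.orthogonalProjection K (x s)) : ℝ)| ≤ 1/5 := by
    calc |(inner ℝ (u j) (x s - Submodule.orthogonalProjection K (x s)) : ℝ)|
        ≤ α * ‖x s - (Submodule.orthogonalProjection K (x s) : EuclideanSpace ℝ (Fin d))‖ := hm
      _ ≤ α * R := by nlinarith
      _ ≤ 1/5 := hαR
  have hfirst : |(inner ℝ (u j) ((Submodule.orthogonalProjection K (x s) : EuclideanSpace ℝ (Fin d))) : ℝ)|
      < 3/10 := by
    have e1 : (inner ℝ (u j) ((Submodule.orthogonalProjection K (x s) : EuclideanSpace ℝ (Fin d))) : ℝ)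
        = (inner ℝ ((Submodule.orthogonalProjection K (u j) : EuclideanSpace ℝ (Fin d))) (x s) : ℝ) :=
      (Submodule.inner_starProjection_left_eq_right K (u j) (x s)).symm
    rw [e1]
    have hcs := abs_real_inner_le_norm
      ((Submodule.orthogonalProjection K (u j) : EuclideanSpace ℝ (Fin d))) (x s)
    have hpn := norm_nonneg ((Submodule.orthogonalProjection K (u j) : EuclideanSpace ℝ (Fin d)))
    have hxn := norm_nonneg (x s)
    have hx2 : ‖x s‖^2 ≤ R^2 := by nlinarith
    have hPx2 : (‖(Submodule.orthogonalProjection K (u j) : EuclideanSpace ℝ (Fin d))‖ * ‖x s‖)^2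
        ≤ (2*α^2*T) * R^2 := by
      have hmm : ‖(Submodule.orthogonalProjection K (u j) : EuclideanSpace ℝ (Fin d))‖^2 * ‖x s‖^2
          ≤ (2*α^2*T) * R^2 :=
        mul_le_mul hAT hx2 (by positivity) (by positivity)
      calc (‖(Submodule.orthogonalProjection K (u j) : EuclideanSpace ℝ (Fin d))‖ * ‖x s‖)^2
          = ‖(Submodule.orthogonalProjection K (u j) : EuclideanSpace ℝ (Fin d))‖^2 * ‖x s‖^2 := by ring
        _ ≤ _ := hmm
    have hRHS : (2*α^2*(T:ℝ))*R^2 = 2/25 := by linear_combination 2*hαRT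
    have hlt : ‖(Submodule.orthogonalProjection K (u j) : EuclideanSpace ℝ (Fin d))‖ * ‖x s‖ < 3/10 := by
      nlinarith [mul_nonneg hpn hxn]
    exact lt_of_le_of_lt hcs hlt
  have hdecomp : (inner ℝ (u j) (x s) : ℝ)
      = (inner ℝ (u j) ((Submodule.orthogonalProjection K (x s) : EuclideanSpace ℝ (Fin d))) : ℝ)
        + (inner ℝ (u j) (x s - Submodule.orthogonalProjection K (x s)) : ℝ) := by
    rw [inner_sub_right]; ring
  set a1 : ℝ := (inner ℝ (u j) ((Submodule.orthogonalProjection K (x s) : EuclideanSpace ℝ (Fin d))) : ℝ)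
    with ha1
  set a2 : ℝ := (inner ℝ (u j) (x s - Submodule.orthogonalProjection K (x s)) : ℝ) with ha2
  rw [hdecomp]
  calc |a1 + a2| ≤ |a1| + |a2| := abs_add_le _ _
    _ < 1/2 := by linarith
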